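/- Let n ≥ 3 and let v : ZMod n → ℝ³ be a closed equilateral n-gon (i.e., ‖v(i+1) − v(i)‖ = 1 for all i) whose diameter is at most 1 (i.e., ‖v(i) − v(j)‖ ≤ 1 for all i, j). Then its total curvature satisfies Σᵢ ∠(v(i+1) − v(i), v(i+2) − v(i+1)) ≥ 2πn/3. -/

import Mathlib

open Real RealInnerProductSpace

lemma angle_ge_aux {u w : EuclideanSpace ℝ (Fin 3)} (hu : ‖u‖ = 1) (hw : ‖w‖ = 1)
    (h : ‖u + w‖ ≤ 1) : 2 * Real.pi / 3 ≤ InnerProductGeometry.angle u w := by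
  have hinner : (inner ℝ u w : ℝ) ≤ -(1/2) := by
    have hsq : ‖u + w‖ ^ 2 ≤ 1 := by
      have := pow_le_pow_left₀ (norm_nonneg _) h 2
      simpa using this
    have hexp : ‖u + w‖ ^ 2 = 2 + 2 * (inner ℝ u w : ℝ) := by
      rw [@norm_add_sq_real, hu, hw]; ring
    nlinarith
  have hangle : InnerProductGeometry.angle u w = Real.arccos (inner ℝ u w : ℝ) := by
    rw [InnerProductGeometry.angle, hu, hw]; norm_num
  rw [hangle]
  have h23 : Real.arccos (-(1/2)) = 2 * Real.pi / 3 := by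
    have hc : Real.cos (2 * Real.pi / 3) = -(1/2) := by
      have : (2 : ℝ) * Real.pi / 3 = Real.pi - Real.pi / 3 := by ring
      rw [this, Real.cos_pi_sub, Real.cos_pi_div_three]
    rw [← hc, Real.arccos_cos] <;> nlinarith [Real.pi_pos]
  calc 2 * Real.pi / 3 = Real.arccos (-(1/2)) := h23.symm
    _ ≤ Real.arccos (inner ℝ u w : ℝ) := by
      have habs : |(inner ℝ u w : ℝ)| ≤ 1 := by
        calc |(inner ℝ u w : ℝ)| ≤ ‖u‖ * ‖w‖ := abs_real_inner_le_norm u w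
          _ = 1 := by rw [hu, hw]; ring
      rcases eq_or_lt_of_le hinner with heq | hlt
      · rw [← heq]
      · exact le_of_lt (Real.strictAntiOn_arccos
          ⟨neg_le_of_abs_le habs, le_of_abs_le habs⟩ (by norm_num) hlt)

/-- A closed equilateral `n`-gon in `ℝ³` (all edges of length 1) whose
diameter is at most 1 has total curvature at least `2πn/3`. -/
theorem totalCurvature_ge_of_diameter_le_one (n : ℕ) (hn : 3 ≤ n) [NeZero n]
    (v : ZMod n → EuclideanSpace ℝ (Fin 3))
    (heq : ∀ i : ZMod n, dist (v (i + 1)) (v i) = 1)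
    (hdiam : ∀ i j : ZMod n, dist (v i) (v j) ≤ 1) :
    2 * Real.pi * n / 3 ≤
      ∑ i : ZMod n,
        InnerProductGeometry.angle (v (i + 1) - v i) (v (i + 2) - v (i + 1)) := by
  have key : ∀ i : ZMod n, 2 * Real.pi / 3 ≤
      InnerProductGeometry.angle (v (i + 1) - v i) (v (i + 2) - v (i + 1)) := by
    intro i
    apply angle_ge_aux
    · rw [← dist_eq_norm]; exact heq i
    · rw [← dist_eq_norm]
      have := heq (i + 1)
      simpa [add_assoc, one_add_one_eq_two] using this
    · have : (v (i + 1) - v i) + (v (i + 2) - v (i + 1)) = v (i + 2) - v i := by abel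
      rw [this, ← dist_eq_norm]
      exact hdiam _ _
  calc 2 * Real.pi * n / 3 = ∑ _i : ZMod n, 2 * Real.pi / 3 := by
        rw [Finset.sum_const]
        simp [ZMod.card]
        ring
    _ ≤ _ := Finset.sum_le_sum fun i _ => key i
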